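/- In a d-dimensional ℤ-VASS (integer VASS, counters may go negative), if there is a ℤ-path from configuration q(w) to q'(w'), then there is one whose multiset of transitions decomposes as: a ℤ-path σ₀ visiting every state used, in which each state occurs at most |Q| times, plus a collection of simple cycles over the used transitions; in particular the effect of σ₀ has norm at most (size of the VASS)², and the effect of each simple cycle has norm at most the size of the VASS. -/

import Mathlib

/-- `IsWalk q l q'`: the list of transitions `l` forms a walk from state `q` to state `q'`. -/
def IsWalk {Q : Type} {d : ℕ} (q : Q) : List (Q × (Fin d → ℤ) × Q) → Q → Prop
  | [], q' => q = q'
  | t :: l, q' => t.1 = q ∧ IsWalk t.2.2 l q'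

namespace Stmt19Aux

set_option linter.unusedSectionVars false

variable {Q : Type} {d : ℕ} [DecidableEq Q]

/-- The list of source states of a list of transitions. -/
def hds (l : List (Q × (Fin d → ℤ) × Q)) : List Q :=
  l.map (fun t : Q × (Fin d → ℤ) × Q => t.1)

/-- The total effect of a list of transitions. -/
def effs (l : List (Q × (Fin d → ℤ) × Q)) : Fin d → ℤ :=
  (l.map (fun t : Q × (Fin d → ℤ) × Q => t.2.1)).sum

lemma isWalk_append {a b : List (Q × (Fin d → ℤ) × Q)} {q m q' : Q}
    (ha : IsWalk q a m) (hb : IsWalk m b q') : IsWalk q (a ++ b) q' := by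
  induction a generalizing q with
  | nil => simp only [IsWalk] at ha; subst ha; simpa using hb
  | cons t l ih => exact ⟨ha.1, ih ha.2⟩

lemma isWalk_split {a b : List (Q × (Fin d → ℤ) × Q)} {q q' : Q}
    (h : IsWalk q (a ++ b) q') : ∃ m, IsWalk q a m ∧ IsWalk m b q' := by
  induction a generalizing q with
  | nil => exact ⟨q, rfl, h⟩
  | cons t l ih =>
    obtain ⟨m, h1, h2⟩ := ih h.2
    exact ⟨m, ⟨h.1, h1⟩, h2⟩

lemma isWalk_unique {l : List (Q × (Fin d → ℤ) × Q)} {q x y : Q}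
    (h1 : IsWalk q l x) (h2 : IsWalk q l y) : x = y := by
  induction l generalizing q with
  | nil => exact h1.symm.trans h2
  | cons t l ih => exact ih h1.2 h2.2

lemma walk_start_eq {b : List (Q × (Fin d → ℤ) × Q)} {x y s s' : Q}
    (hne : b ≠ []) (h1 : IsWalk x b y) (h2 : IsWalk s b s') : x = s := by
  cases b with
  | nil => exact absurd rfl hne
  | cons t l => exact h1.1.symm.trans h2.1

lemma hds_append (a b : List (Q × (Fin d → ℤ) × Q)) : hds (a ++ b) = hds a ++ hds b :=
  List.map_append

lemma anchor_mem_hds {b : List (Q × (Fin d → ℤ) × Q)} {s s' : Q}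
    (hne : b ≠ []) (h : IsWalk s b s') : s ∈ hds b := by
  cases b with
  | nil => exact absurd rfl hne
  | cons t l => exact List.mem_cons.mpr (Or.inl h.1.symm)

lemma not_nodup_decomp {α : Type*} : ∀ {l : List α}, ¬ l.Nodup →
    ∃ (t : α) (u v w : List α), l = u ++ t :: (v ++ t :: w) := by
  intro l
  induction l with
  | nil => intro h; exact absurd List.nodup_nil h
  | cons a l ih =>
    intro h
    rw [List.nodup_cons] at h
    by_cases ha : a ∈ l
    · obtain ⟨v, w, rfl⟩ := List.append_of_mem ha
      exact ⟨a, [], v, w, rfl⟩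
    · have hl : ¬ l.Nodup := by tauto
      obtain ⟨t, u, v, w, rfl⟩ := ih hl
      exact ⟨t, a :: u, v, w, rfl⟩

lemma split_first {l : List (Q × (Fin d → ℤ) × Q)} {r : Q} (h : r ∈ hds l) :
    ∃ a t c, l = a ++ t :: c ∧ (t : Q × (Fin d → ℤ) × Q).1 = r ∧ r ∉ hds a := by
  induction l with
  | nil => simp [hds] at h
  | cons u l ih =>
    by_cases hu : u.1 = r
    · exact ⟨[], u, l, rfl, hu, by simp [hds]⟩
    · have hr : r ∈ hds l := by
        simp [hds] at h ⊢
        rcases h with h | h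
        · exact absurd h.symm (by simpa using fun e => hu e)
        · exact h
      obtain ⟨a, t, c, rfl, ht, ha⟩ := ih hr
      refine ⟨u :: a, t, c, rfl, ht, ?_⟩
      simp [hds] at ha ⊢
      exact ⟨fun e => hu e.symm, ha⟩

/-- A walk admits a "safe" cycle extraction: a nonempty cycle segment whose anchor and
all of whose source states still occur among the source states of the remainder. -/
def Safe (l : List (Q × (Fin d → ℤ) × Q)) : Prop :=
  ∃ a b c s, l = a ++ b ++ c ∧ b ≠ [] ∧ IsWalk s b s ∧ s ∈ hds (a ++ c) ∧
    ∀ x ∈ hds b, x ∈ hds (a ++ c)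

lemma safe_append_left {p l : List (Q × (Fin d → ℤ) × Q)} (h : Safe l) : Safe (p ++ l) := by
  obtain ⟨a, b, c, s, rfl, hb, hw, hs, hsub⟩ := h
  refine ⟨p ++ a, b, c, s, by simp, hb, hw, ?_, ?_⟩
  · rw [hds_append, List.mem_append] at hs
    rw [hds_append, hds_append, List.mem_append]
    rcases hs with h | h
    · exact Or.inl (by rw [List.mem_append]; exact Or.inr h)
    · exact Or.inr h
  · intro x hx
    have hh := hsub x hx
    rw [hds_append, List.mem_append] at hh
    rw [hds_append, hds_append, List.mem_append]
    rcases hh with h | h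
    · exact Or.inl (by rw [List.mem_append]; exact Or.inr h)
    · exact Or.inr h


lemma hds_count_cons (t : Q × (Fin d → ℤ) × Q) (l : List (Q × (Fin d → ℤ) × Q)) (r : Q) :
    (hds (t :: l)).count r = (if t.1 = r then 1 else 0) + (hds l).count r := by
  simp [hds, List.count_cons]
  by_cases h : t.1 = r <;> simp [h]
  · omega

lemma count_eq_zero_of_not_mem_hds {l : List (Q × (Fin d → ℤ) × Q)} {r : Q}
    (h : r ∉ hds l) : (hds l).count r = 0 :=
  List.count_eq_zero.mpr h

lemma counts_of_noSafe : ∀ (n : ℕ) (l : List (Q × (Fin d → ℤ) × Q)), l.length ≤ n →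
    ∀ s q'', IsWalk s l q'' → ¬ Safe l →
    ∀ r, (hds l).count r ≤ (hds l).toFinset.card := by
  intro n
  induction n with
  | zero =>
    intro l hl s q'' hw hns r
    have : l = [] := List.length_eq_zero_iff.mp (Nat.le_zero.mp hl)
    subst this
    simp [hds]
  | succ n ih =>
    intro l hl s q'' hw hns r
    by_cases hr2 : 2 ≤ (hds l).count r
    · -- at least two occurrences of r as a source state
      have hr : r ∈ hds l := List.count_pos_iff.mp (by omega)
      obtain ⟨a, t, c₀, rfl, ht, ha⟩ := split_first hr
      have hcnt0 : (hds a).count r = 0 := count_eq_zero_of_not_mem_hds ha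
      have hcnt : (hds (a ++ t :: c₀)).count r = 1 + (hds c₀).count r := by
        rw [hds_append, List.count_append, hds_count_cons, hcnt0, if_pos ht]
        omega
      have hc₀ : r ∈ hds c₀ := by
        apply List.count_pos_iff.mp
        omega
      obtain ⟨m, t', c, rfl, ht', hm⟩ := split_first hc₀
      -- l = a ++ t :: (m ++ t' :: c)
      -- walks
      obtain ⟨x, wa, w1⟩ := isWalk_split hw
      have w2 : IsWalk t.2.2 (m ++ t' :: c) q'' := w1.2
      obtain ⟨y, wm, wtc⟩ := isWalk_split w2
      have hyr : y = r := by
        have := wtc.1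
        rw [ht'] at this; exact this.symm
      -- the segment t :: m is a cycle at r
      have hxr : x = r := by
        have := w1.1; rw [ht] at this; exact this.symm
      have wcyc : IsWalk r (t :: m) r := by
        refine ⟨ht, ?_⟩
        rw [← hyr]; exact wm
      -- it is not safe, so it has a private source state x₀
      have hprv : ∃ x₀ ∈ hds (t :: m), x₀ ∉ hds (a ++ t' :: c) := by
        by_contra hcon
        push_neg at hcon
        apply hns
        refine ⟨a, t :: m, t' :: c, r, by simp, by simp, wcyc, ?_, hcon⟩
        rw [hds_append, List.mem_append]
        right
        exact List.mem_cons.mpr (Or.inl ht'.symm)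
      obtain ⟨x₀, hx₀mem, hx₀not⟩ := hprv
      -- the suffix t' :: c
      have hnsafe2 : ¬ Safe (t' :: c) := by
        intro hS
        apply hns
        have := safe_append_left (p := a ++ t :: m) hS
        simpa using this
      have hlen2 : (t' :: c).length ≤ n := by
        simp at hl ⊢
        omega
      have hIH := ih (t' :: c) hlen2 y q'' wtc hnsafe2 r
      -- count arithmetic
      have hmcnt : (hds m).count r = 0 := count_eq_zero_of_not_mem_hds hm
      have hcount : (hds (a ++ t :: (m ++ t' :: c))).count r
          = 1 + (hds (t' :: c)).count r := by
        rw [hds_append, List.count_append, hds_count_cons, if_pos ht, hcnt0,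
          hds_append, List.count_append, hmcnt]
        omega
      -- cardinality
      have hx₀l : x₀ ∈ hds (a ++ t :: (m ++ t' :: c)) := by
        rw [hds_append, List.mem_append]
        right
        rcases List.mem_cons.mp hx₀mem with h | h
        · exact List.mem_cons.mpr (Or.inl h)
        · refine List.mem_cons.mpr (Or.inr ?_)
          rw [List.map_append, List.mem_append]; exact Or.inl h
      have hx₀nc : x₀ ∉ hds (t' :: c) := by
        intro hcmem
        apply hx₀not
        rw [hds_append, List.mem_append]
        exact Or.inr hcmem
      have hsubset : insert x₀ (hds (t' :: c)).toFinset ⊆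
          (hds (a ++ t :: (m ++ t' :: c))).toFinset := by
        intro z hz
        rcases Finset.mem_insert.mp hz with rfl | hz
        · exact List.mem_toFinset.mpr hx₀l
        · have hzc := List.mem_toFinset.mp hz
          apply List.mem_toFinset.mpr
          rw [hds_append, List.mem_append]
          right
          rcases List.mem_cons.mp hzc with h | h
          · refine List.mem_cons.mpr (Or.inr ?_)
            rw [List.map_append, List.mem_append]
            right; exact List.mem_cons.mpr (Or.inl h)
          · refine List.mem_cons.mpr (Or.inr ?_)
            rw [List.map_append, List.mem_append]
            right; exact List.mem_cons.mpr (Or.inr h)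
      have hcard : (hds (t' :: c)).toFinset.card + 1 ≤
          (hds (a ++ t :: (m ++ t' :: c))).toFinset.card := by
        have h1 : (insert x₀ (hds (t' :: c)).toFinset).card
            = (hds (t' :: c)).toFinset.card + 1 :=
          Finset.card_insert_of_notMem (by simpa using hx₀nc)
        have := Finset.card_le_card hsubset
        omega
      omega
    · -- at most one occurrence
      by_cases h0 : (hds l).count r = 0
      · simp [h0]
      · have hr : r ∈ hds l := List.count_pos_iff.mp (by omega)
        have : 1 ≤ (hds l).toFinset.card := by
          apply Finset.card_pos.mpr
          exact ⟨r, List.mem_toFinset.mpr hr⟩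
        omega


lemma cycle_decomp : ∀ (n : ℕ) (b : List (Q × (Fin d → ℤ) × Q)), b.length ≤ n →
    ∀ s, b ≠ [] → IsWalk s b s →
    ∃ scycs : List (Q × List (Q × (Fin d → ℤ) × Q)),
      (∀ c ∈ scycs, c.2 ≠ [] ∧ IsWalk c.1 c.2 c.1 ∧ c.2.Nodup ∧ ∀ t ∈ c.2, t ∈ b) ∧
      (scycs.map (fun c => effs c.2)).sum = effs b := by
  intro n
  induction n with
  | zero =>
    intro b hb s hne _
    exact absurd (List.length_eq_zero_iff.mp (Nat.le_zero.mp hb)) hne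
  | succ n ih =>
    intro b hb s hne hw
    by_cases hnd : b.Nodup
    · refine ⟨[(s, b)], ?_, by simp⟩
      intro c hc
      rcases List.mem_singleton.mp hc with rfl
      exact ⟨hne, hw, hnd, fun t ht => ht⟩
    · obtain ⟨t, u, v, w, rfl⟩ := not_nodup_decomp hnd
      -- walks
      obtain ⟨x, wu, w1⟩ := isWalk_split hw
      have w2 : IsWalk t.2.2 (v ++ t :: w) s := w1.2
      obtain ⟨y, wv, wtw⟩ := isWalk_split w2
      have hy : y = t.1 := wtw.1.symm
      have hx : x = t.1 := w1.1.symm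
      have wc1 : IsWalk t.1 (t :: v) t.1 := ⟨rfl, hy ▸ wv⟩
      have wb' : IsWalk s (u ++ t :: w) s := by
        refine isWalk_append wu ?_
        exact ⟨hx.symm, wtw.2⟩
      have hlen : (u ++ t :: (v ++ t :: w)).length
          = u.length + v.length + w.length + 2 := by
        simp; omega
      have hl1 : (t :: v).length ≤ n := by
        simp at hb ⊢; omega
      have hl2 : (u ++ t :: w).length ≤ n := by
        simp at hb ⊢; omega
      obtain ⟨s1, P1, E1⟩ := ih (t :: v) hl1 t.1 (by simp) wc1
      obtain ⟨s2, P2, E2⟩ := ih (u ++ t :: w) hl2 s (by simp) wb'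
      refine ⟨s1 ++ s2, ?_, ?_⟩
      · intro c hc
        rcases List.mem_append.mp hc with hc | hc
        · obtain ⟨h1, h2, h3, h4⟩ := P1 c hc
          refine ⟨h1, h2, h3, fun t' ht' => ?_⟩
          have := h4 t' ht'
          simp at this ⊢
          tauto
        · obtain ⟨h1, h2, h3, h4⟩ := P2 c hc
          refine ⟨h1, h2, h3, fun t' ht' => ?_⟩
          have := h4 t' ht'
          simp at this ⊢
          tauto
      · rw [List.map_append, List.sum_append, E1, E2]
        simp only [effs, List.map_append, List.sum_append, List.map_cons, List.sum_cons]
        abel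


lemma main : ∀ (n : ℕ) (l : List (Q × (Fin d → ℤ) × Q)), l.length ≤ n →
    ∀ q q', IsWalk q l q' →
    ∃ (σ₀ : List (Q × (Fin d → ℤ) × Q)) (cycs : List (Q × List (Q × (Fin d → ℤ) × Q))),
      IsWalk q σ₀ q' ∧ (∀ t ∈ σ₀, t ∈ l) ∧
      (∀ c ∈ cycs, c.2 ≠ [] ∧ IsWalk c.1 c.2 c.1 ∧ (∀ t ∈ c.2, t ∈ l) ∧ c.2.Nodup ∧
        c.1 ∈ hds σ₀) ∧
      (∀ x ∈ hds l, x ∈ hds σ₀) ∧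
      effs σ₀ + (cycs.map (fun c => effs c.2)).sum = effs l ∧
      (∀ r, (hds σ₀).count r ≤ (hds σ₀).toFinset.card) := by
  intro n
  induction n with
  | zero =>
    intro l hl q q' hw
    have : l = [] := List.length_eq_zero_iff.mp (Nat.le_zero.mp hl)
    subst this
    exact ⟨[], [], hw, fun t ht => ht, by simp, fun x hx => hx, by simp [effs], by simp [hds]⟩
  | succ n ih =>
    intro l hl q q' hw
    by_cases hs : Safe l
    · obtain ⟨a, b, c, s, rfl, hbne, hwb, hanch, hsub⟩ := hs
      have hw' : IsWalk q (a ++ (b ++ c)) q' := by rwa [List.append_assoc] at hw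
      obtain ⟨x, wa, w1⟩ := isWalk_split hw'
      obtain ⟨y, wb, wc⟩ := isWalk_split w1
      have hxs : x = s := walk_start_eq hbne wb hwb
      have hys : y = s := isWalk_unique (hxs ▸ wb) hwb
      have hwl' : IsWalk q (a ++ c) q' := isWalk_append (hxs ▸ wa) (hys ▸ wc)
      have hlen' : (a ++ c).length ≤ n := by
        have hbpos : 1 ≤ b.length := by
          cases b with
          | nil => exact absurd rfl hbne
          | cons _ _ => simp
        simp at hl ⊢
        omega
      obtain ⟨σ₀, cycs₁, W, Sub, Cyc, Hds, Eff, Cnt⟩ := ih (a ++ c) hlen' q q' hwl'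
      obtain ⟨scycs, Pc, Peff⟩ := cycle_decomp b.length b le_rfl s hbne hwb
      refine ⟨σ₀, scycs ++ cycs₁, W, ?_, ?_, ?_, ?_, Cnt⟩
      · intro t ht
        have := Sub t ht
        simp at this ⊢
        tauto
      · intro c' hc'
        rcases List.mem_append.mp hc' with hc' | hc'
        · obtain ⟨h1, h2, h3, h4⟩ := Pc c' hc'
          refine ⟨h1, h2, fun t ht => ?_, h3, ?_⟩
          · have := h4 t ht
            simp
            tauto
          · -- anchor of a simple cycle from b lies on σ₀
            have hanch' : c'.1 ∈ hds b := by
              cases hcb : c'.2 with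
              | nil => exact absurd hcb h1
              | cons t0 rest =>
                have ht0 : t0.1 = c'.1 := by
                  have := h2
                  rw [hcb] at this
                  exact this.1
                have ht0b : t0 ∈ b := h4 t0 (by rw [hcb]; simp)
                rw [← ht0]
                exact List.mem_map.mpr ⟨t0, ht0b, rfl⟩
            exact Hds _ (hsub _ hanch')
        · obtain ⟨h1, h2, h3, h4, h5⟩ := Cyc c' hc'
          refine ⟨h1, h2, fun t ht => ?_, h4, h5⟩
          have := h3 t ht
          simp at this ⊢
          tauto
      · intro z hz
        simp only [hds_append, List.mem_append] at hz
        rcases hz with (hz | hz) | hz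
        · exact Hds z (by rw [hds_append, List.mem_append]; exact Or.inl hz)
        · exact Hds z (hsub z hz)
        · exact Hds z (by rw [hds_append, List.mem_append]; exact Or.inr hz)
      · rw [List.map_append, List.sum_append]
        simp only [effs, List.map_append, List.sum_append] at Eff Peff ⊢
        have hre : (List.map (fun t : Q × (Fin d → ℤ) × Q => t.2.1) σ₀).sum +
            ((List.map (fun c => (List.map (fun t : Q × (Fin d → ℤ) × Q => t.2.1) c.2).sum) scycs).sum +
              (List.map (fun c => (List.map (fun t : Q × (Fin d → ℤ) × Q => t.2.1) c.2).sum) cycs₁).sum)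
            = ((List.map (fun t : Q × (Fin d → ℤ) × Q => t.2.1) σ₀).sum +
              (List.map (fun c => (List.map (fun t : Q × (Fin d → ℤ) × Q => t.2.1) c.2).sum) cycs₁).sum) +
              (List.map (fun c => (List.map (fun t : Q × (Fin d → ℤ) × Q => t.2.1) c.2).sum) scycs).sum := by
          abel
        rw [hre, Eff, Peff]
        abel
    · refine ⟨l, [], hw, fun t ht => ht, by simp, fun x hx => hx, by simp,
        counts_of_noSafe (n + 1) l hl q q' hw hs⟩


lemma nrm_sum_le (L : List (Fin d → ℤ)) :
    (∑ i, (L.sum i).natAbs) ≤ (L.map (fun v => ∑ i, (v i).natAbs)).sum := by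
  induction L with
  | nil => simp
  | cons v L ih =>
    rw [List.sum_cons, List.map_cons, List.sum_cons]
    calc ∑ i, ((v + L.sum) i).natAbs
        ≤ ∑ i, ((v i).natAbs + (L.sum i).natAbs) :=
          Finset.sum_le_sum (fun i _ => Int.natAbs_add_le _ _)
      _ = (∑ i, (v i).natAbs) + ∑ i, (L.sum i).natAbs := Finset.sum_add_distrib
      _ ≤ _ := Nat.add_le_add_left ih _

end Stmt19Aux


theorem stmt19 (Q : Type) [DecidableEq Q] [Fintype Q] (d : ℕ)
    (T : Finset (Q × (Fin d → ℤ) × Q)) (M : ℕ)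
    (hM : M = ∑ t ∈ T, (1 + ∑ i, (t.2.1 i).natAbs))
    (q q' : Q) (w w' : Fin d → ℤ)
    (h : ∃ l : List (Q × (Fin d → ℤ) × Q),
      IsWalk q l q' ∧ (∀ t ∈ l, t ∈ T) ∧ w + (l.map (fun t : Q × (Fin d → ℤ) × Q => t.2.1)).sum = w') :
    ∃ (σ₀ : List (Q × (Fin d → ℤ) × Q)) (cycs : List (Q × List (Q × (Fin d → ℤ) × Q))),
      IsWalk q σ₀ q' ∧ (∀ t ∈ σ₀, t ∈ T) ∧
      (∀ c ∈ cycs, c.2 ≠ [] ∧ IsWalk c.1 c.2 c.1 ∧ (∀ t ∈ c.2, t ∈ T) ∧ c.2.Nodup) ∧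
      (∀ c ∈ cycs, c.1 = q ∨ ∃ t ∈ σ₀, t.1 = c.1 ∨ t.2.2 = c.1) ∧
      (∀ r : Q, (σ₀.map (fun t : Q × (Fin d → ℤ) × Q => t.1)).count r ≤ Fintype.card Q) ∧
      w + (σ₀.map (fun t : Q × (Fin d → ℤ) × Q => t.2.1)).sum
        + (cycs.map (fun c => (c.2.map (fun t : Q × (Fin d → ℤ) × Q => t.2.1)).sum)).sum = w' ∧
      (∑ i, (((σ₀.map (fun t : Q × (Fin d → ℤ) × Q => t.2.1)).sum) i).natAbs) ≤ M ^ 2 ∧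
      ∀ c ∈ cycs, (∑ i, (((c.2.map (fun t : Q × (Fin d → ℤ) × Q => t.2.1)).sum) i).natAbs) ≤ M := by
  obtain ⟨l, hw, hT, hsum⟩ := h
  obtain ⟨σ₀, cycs, W, Sub, Cyc, Hds, Eff, Cnt⟩ := Stmt19Aux.main l.length l le_rfl q q' hw
  have hσT : ∀ t ∈ σ₀, t ∈ T := fun t ht => hT t (Sub t ht)
  have hM' : M = T.card + ∑ t ∈ T, (∑ i, (t.2.1 i).natAbs) := by
    rw [hM, Finset.sum_add_distrib]
    simp
  have hTcardM : T.card ≤ M := by omega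
  have hBM : (∑ t ∈ T, (∑ i, (t.2.1 i).natAbs)) ≤ M := by omega
  set K := (Stmt19Aux.hds σ₀).toFinset.card with hK
  have hKT : K ≤ T.card := by
    have hsubs : (Stmt19Aux.hds σ₀).toFinset ⊆
        T.image (fun t : Q × (Fin d → ℤ) × Q => t.1) := by
      intro z hz
      obtain ⟨t, ht, rfl⟩ := List.mem_map.mp (List.mem_toFinset.mp hz)
      exact Finset.mem_image.mpr ⟨t, hσT t ht, rfl⟩
    exact le_trans (Finset.card_le_card hsubs) Finset.card_image_le
  have hσsub : σ₀.toFinset ⊆ T := fun t ht => hσT t (List.mem_toFinset.mp ht)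
  refine ⟨σ₀, cycs, W, hσT, ?_, ?_, ?_, ?_, ?_, ?_⟩
  · intro c hc
    obtain ⟨h1, h2, h3, h4, h5⟩ := Cyc c hc
    exact ⟨h1, h2, fun t ht => hT t (h3 t ht), h4⟩
  · intro c hc
    obtain ⟨h1, h2, h3, h4, h5⟩ := Cyc c hc
    obtain ⟨t, ht, hteq⟩ := List.mem_map.mp h5
    exact Or.inr ⟨t, ht, Or.inl hteq⟩
  · intro r
    exact le_trans (Cnt r) (Finset.card_le_univ _)
  · have hEff : (σ₀.map (fun t : Q × (Fin d → ℤ) × Q => t.2.1)).sum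
        + (cycs.map (fun c => (c.2.map (fun t : Q × (Fin d → ℤ) × Q => t.2.1)).sum)).sum
        = (l.map (fun t : Q × (Fin d → ℤ) × Q => t.2.1)).sum := Eff
    rw [add_assoc, hEff, hsum]
  · -- the σ₀ norm bound
    have step1 := Stmt19Aux.nrm_sum_le (σ₀.map (fun t : Q × (Fin d → ℤ) × Q => t.2.1))
    rw [List.map_map] at step1
    have step3 : ∀ t ∈ σ₀.toFinset,
        @List.count _ instBEqOfDecidableEq t σ₀ ≤ K := by
      intro t _
      have h1 : @List.count _ instBEqOfDecidableEq t σ₀ ≤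
          ((σ₀.map (fun t : Q × (Fin d → ℤ) × Q => t.1)).count t.1) :=
        @List.count_le_count_map _ instBEqOfDecidableEq (@instLawfulBEq _ _) _ _ _ σ₀ (fun t : Q × (Fin d → ℤ) × Q => t.1) t
      exact le_trans h1 (Cnt t.1)
    have step2 := Finset.sum_list_map_count σ₀
      ((fun v : Fin d → ℤ => ∑ i, (v i).natAbs) ∘ (fun t : Q × (Fin d → ℤ) × Q => t.2.1))
    rw [step2] at step1
    have step5 : ∑ t ∈ σ₀.toFinset, K * (∑ i, (t.2.1 i).natAbs) ≤ M * M := by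
      rw [← Finset.mul_sum]
      exact Nat.mul_le_mul (le_trans hKT hTcardM)
        (le_trans (Finset.sum_le_sum_of_subset hσsub) hBM)
    have hMM : M * M = M ^ 2 := (sq M).symm
    rw [← hMM]
    refine le_trans step1 (le_trans (Finset.sum_le_sum ?_) step5)
    intro t ht
    simp only [smul_eq_mul, Function.comp_apply]
    exact Nat.mul_le_mul_right _ (step3 t ht)
  · -- the cycle norm bounds
    intro c hc
    obtain ⟨h1, h2, h3, h4, h5⟩ := Cyc c hc
    have hcT : c.2.toFinset ⊆ T := fun t ht => hT t (h3 t (List.mem_toFinset.mp ht))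
    have s1 := Stmt19Aux.nrm_sum_le (c.2.map (fun t : Q × (Fin d → ℤ) × Q => t.2.1))
    rw [List.map_map] at s1
    calc (∑ i, (((c.2.map (fun t : Q × (Fin d → ℤ) × Q => t.2.1)).sum) i).natAbs)
        ≤ (c.2.map ((fun v : Fin d → ℤ => ∑ i, (v i).natAbs) ∘
            (fun t : Q × (Fin d → ℤ) × Q => t.2.1))).sum := s1
      _ = ∑ t ∈ c.2.toFinset, (((fun v : Fin d → ℤ => ∑ i, (v i).natAbs) ∘
            (fun t : Q × (Fin d → ℤ) × Q => t.2.1)) t) := (List.sum_toFinset _ h4).symm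
      _ = ∑ t ∈ c.2.toFinset, (∑ i, (t.2.1 i).natAbs) :=
          Finset.sum_congr rfl (fun t ht => rfl)
      _ ≤ ∑ t ∈ T, (∑ i, (t.2.1 i).natAbs) := Finset.sum_le_sum_of_subset hcT
      _ ≤ M := hBM
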